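/- arXiv:2309.07086 — 2 statements merged into one kernel-verified Lean document; each statement's English description precedes it below -/
import Mathlib

section
/- Let f : ℝⁿ → ℝ be continuously differentiable with L-Lipschitz gradient, fix u ∈ ℝⁿ with g := ∇f(u) ≠ 0, let H be symmetric positive semidefinite with ‖H‖ ≤ M_H, γ > 0, η ∈ (0,1), θ ∈ [0,1), m_γ(s) = f(u) + gᵀs + (1/2)sᵀ(H + γI)s, and let s satisfy (H + γI)s = −g + t with ‖t‖ ≤ θ√(γ/(‖H‖+γ))‖g‖. If the iteration is unsuccessful, i.e. f(u + s) − f(u) > η(m_γ(s) − m_γ(0)), then (1 − η)(1 − θ²) γ² < (1 + θ)² (L − γ)(M_H + γ); in particular γ < L. -/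
open Matrix
open scoped Matrix.Norms.L2Operator RealInnerProductSpace Gradient


/-- Descent lemma. -/
lemma descent_lemma_aux {n : ℕ} (f : EuclideanSpace ℝ (Fin n) → ℝ) (hf : ContDiff ℝ 1 f)
    (L : ℝ) (hLip : ∀ x y : EuclideanSpace ℝ (Fin n), ‖∇ f x - ∇ f y‖ ≤ L * ‖x - y‖)
    (u s : EuclideanSpace ℝ (Fin n)) :
    f (u + s) ≤ f u + ⟪∇ f u, s⟫ + L / 2 * ‖s‖ ^ 2 := by
  have hdiff : Differentiable ℝ f := hf.differentiable one_ne_zero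
  have hgrad : ∀ x : EuclideanSpace ℝ (Fin n), ∀ v, (fderiv ℝ f x) v = ⟪∇ f x, v⟫ := by
    intro x v
    have h1 : HasFDerivAt f ((InnerProductSpace.toDual ℝ _) (∇ f x)) x :=
      (hdiff x).hasGradientAt.hasFDerivAt
    rw [h1.fderiv]
    simp [InnerProductSpace.toDual_apply_apply]
  set φ : ℝ → ℝ := fun τ => f (u + τ • s) - (τ * ⟪∇ f u, s⟫ + L / 2 * (τ ^ 2 * ‖s‖ ^ 2))
    with hφ
  have hφ' : ∀ τ : ℝ, HasDerivAt φ
      (⟪∇ f (u + τ • s), s⟫ - (⟪∇ f u, s⟫ + L / 2 * (2 * τ * ‖s‖ ^ 2))) τ := by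
    intro τ
    have hc : HasDerivAt (fun τ : ℝ => u + τ • s) s τ := by
      simpa using ((hasDerivAt_id τ).smul_const s).const_add u
    have hfd : HasFDerivAt f (fderiv ℝ f (u + τ • s)) (u + τ • s) :=
      (hdiff _).hasFDerivAt
    have h1 : HasDerivAt (fun τ : ℝ => f (u + τ • s))
        ((fderiv ℝ f (u + τ • s)) s) τ := hfd.comp_hasDerivAt τ hc
    rw [hgrad] at h1
    have h2 : HasDerivAt (fun τ : ℝ => τ * ⟪∇ f u, s⟫ + L / 2 * (τ ^ 2 * ‖s‖ ^ 2))
        (⟪∇ f u, s⟫ + L / 2 * (2 * τ * ‖s‖ ^ 2)) τ := by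
      have h3 : HasDerivAt (fun τ : ℝ => τ ^ 2) (2 * τ) τ := by
        simpa using hasDerivAt_pow 2 τ
      have h4 := (h3.mul_const (‖s‖ ^ 2)).const_mul (L / 2)
      have h5 := ((hasDerivAt_id τ).mul_const (⟪∇ f u, s⟫ : ℝ)).add h4
      exact h5.congr_deriv (by ring)
    exact h1.sub h2
  have hmono : AntitoneOn φ (Set.Icc (0:ℝ) 1) := by
    apply antitoneOn_of_deriv_nonpos (convex_Icc 0 1)
    · exact fun τ _ => (hφ' τ).continuousAt.continuousWithinAt
    · intro τ _
      exact (hφ' τ).differentiableAt.differentiableWithinAt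
    · intro τ hτ
      rw [interior_Icc] at hτ
      rw [(hφ' τ).deriv]
      have hb : ⟪∇ f (u + τ • s) - ∇ f u, s⟫ ≤ L * (τ * ‖s‖) * ‖s‖ := by
        calc ⟪∇ f (u + τ • s) - ∇ f u, s⟫ ≤ ‖∇ f (u + τ • s) - ∇ f u‖ * ‖s‖ :=
              real_inner_le_norm _ _
          _ ≤ (L * ‖(u + τ • s) - u‖) * ‖s‖ := by
              have := hLip (u + τ • s) u
              exact mul_le_mul_of_nonneg_right this (norm_nonneg s)
          _ = L * (τ * ‖s‖) * ‖s‖ := by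
              rw [add_sub_cancel_left, norm_smul, Real.norm_eq_abs,
                abs_of_pos hτ.1]
      rw [inner_sub_left] at hb
      nlinarith [hb]
  have h01 := hmono (Set.left_mem_Icc.mpr zero_le_one) (Set.right_mem_Icc.mpr zero_le_one)
    zero_le_one
  simp only [hφ, zero_smul, add_zero, one_smul, zero_pow, one_pow, mul_zero, zero_mul,
    mul_one, one_mul] at h01
  linarith


section
variable {n : ℕ}

/-- Cauchy–Schwarz for the psd form ⟪·, A ·⟫. -/
lemma cs_psd_form (A : EuclideanSpace ℝ (Fin n) →ₗ[ℝ] EuclideanSpace ℝ (Fin n))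
    (hsym : ∀ x y : EuclideanSpace ℝ (Fin n), ⟪A x, y⟫ = ⟪x, A y⟫)
    (hpos : ∀ x : EuclideanSpace ℝ (Fin n), 0 ≤ ⟪x, A x⟫)
    (x y : EuclideanSpace ℝ (Fin n)) :
    ⟪x, A y⟫ ^ 2 ≤ ⟪x, A x⟫ * ⟪y, A y⟫ := by
  have key : ∀ r : ℝ, 0 ≤ ⟪y, A y⟫ * (r * r) + (2 * ⟪x, A y⟫) * r + ⟪x, A x⟫ := by
    intro r
    have h := hpos (x + r • y)
    have hyx : ⟪y, A x⟫ = ⟪x, A y⟫ := by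
      rw [← hsym y x, real_inner_comm]
    simp only [map_add, LinearMap.map_smul, inner_add_left, inner_add_right, inner_smul_left,
      inner_smul_right, RCLike.star_def, starRingEnd_apply, star_trivial] at h
    rw [hyx] at h
    nlinarith [h]
  have hd := discrim_le_zero key
  rw [discrim] at hd
  nlinarith [hd]

lemma matrix_facts (H : Matrix (Fin n) (Fin n) ℝ) (hH : H.PosSemidef) (γ : ℝ) (hγ : 0 < γ) :
    let A := Matrix.toEuclideanLin (H + γ • (1 : Matrix (Fin n) (Fin n) ℝ))
    (∀ x y : EuclideanSpace ℝ (Fin n), ⟪A x, y⟫ = ⟪x, A y⟫) ∧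
    (∀ x : EuclideanSpace ℝ (Fin n), γ * ‖x‖ ^ 2 ≤ ⟪x, A x⟫) ∧
    (∀ x : EuclideanSpace ℝ (Fin n), ⟪x, A x⟫ ≤ (‖H‖ + γ) * ‖x‖ ^ 2) ∧
    Function.Surjective A := by
  intro A
  have herm : (H + γ • (1 : Matrix (Fin n) (Fin n) ℝ)).IsHermitian := by
    have h1 : (γ • (1 : Matrix (Fin n) (Fin n) ℝ)).IsHermitian := by
      simp [Matrix.IsHermitian, Matrix.conjTranspose_smul]
    exact hH.1.add h1
  have hsym : ∀ x y : EuclideanSpace ℝ (Fin n), ⟪A x, y⟫ = ⟪x, A y⟫ :=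
    fun x y => (Matrix.isHermitian_iff_isSymmetric.mp herm) x y
  have hAx : ∀ x : EuclideanSpace ℝ (Fin n), A x = Matrix.toEuclideanLin H x + γ • x := by
    intro x
    show (WithLp.equiv 2 (Fin n → ℝ)).symm
        ((H + γ • 1) *ᵥ (WithLp.equiv 2 (Fin n → ℝ)) x) = _
    rw [Matrix.add_mulVec, Matrix.smul_mulVec, Matrix.one_mulVec]
    rfl
  have hHpos : ∀ x : EuclideanSpace ℝ (Fin n), 0 ≤ ⟪x, Matrix.toEuclideanLin H x⟫ := by
    intro x
    have h := (Matrix.posSemidef_iff_dotProduct_mulVec.mp hH).2 ((WithLp.equiv 2 (Fin n → ℝ)) x)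
    simpa [EuclideanSpace.inner_eq_star_dotProduct, Matrix.toEuclideanLin_apply, dotProduct_comm (H *ᵥ _)] using h
  have hHub : ∀ x : EuclideanSpace ℝ (Fin n), ⟪x, Matrix.toEuclideanLin H x⟫ ≤ ‖H‖ * ‖x‖ ^ 2 := by
    intro x
    have h1 : ‖Matrix.toEuclideanLin H x‖ ≤ ‖H‖ * ‖x‖ := Matrix.l2_opNorm_mulVec H x
    calc ⟪x, Matrix.toEuclideanLin H x⟫ ≤ ‖x‖ * ‖Matrix.toEuclideanLin H x‖ :=
          real_inner_le_norm _ _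
      _ ≤ ‖x‖ * (‖H‖ * ‖x‖) := by
          exact mul_le_mul_of_nonneg_left h1 (norm_nonneg x)
      _ = ‖H‖ * ‖x‖ ^ 2 := by ring
  have hcoer : ∀ x : EuclideanSpace ℝ (Fin n), γ * ‖x‖ ^ 2 ≤ ⟪x, A x⟫ := by
    intro x
    rw [hAx, inner_add_right, inner_smul_right, real_inner_self_eq_norm_sq]
    nlinarith [hHpos x]
  have hub : ∀ x : EuclideanSpace ℝ (Fin n), ⟪x, A x⟫ ≤ (‖H‖ + γ) * ‖x‖ ^ 2 := by
    intro x
    rw [hAx, inner_add_right, inner_smul_right, real_inner_self_eq_norm_sq]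
    nlinarith [hHub x]
  refine ⟨hsym, hcoer, hub, ?_⟩
  have hinj : Function.Injective A := by
    intro x y hxy
    have h0 : A (x - y) = 0 := by rw [map_sub, hxy, sub_self]
    have h1 := hcoer (x - y)
    rw [h0, inner_zero_right] at h1
    have : ‖x - y‖ ^ 2 ≤ 0 := by nlinarith
    have : ‖x - y‖ = 0 := by nlinarith [norm_nonneg (x - y)]
    rw [← sub_eq_zero]
    exact norm_eq_zero.mp this
  exact LinearMap.surjective_of_injective hinj

end

set_option maxHeartbeats 1000000

/-- If an inexact-step iteration is unsuccessful, then
`(1-η)(1-θ²)γ² < (1+θ)²(L-γ)(M_H+γ)`; in particular `γ < L`. -/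
theorem inexact_unsuccessful_iteration_gamma_bound
    (n : ℕ) (f : EuclideanSpace ℝ (Fin n) → ℝ)
    (hf : ContDiff ℝ 1 f)
    (L : ℝ) (hL : 0 < L)
    (hLip : ∀ x y : EuclideanSpace ℝ (Fin n), ‖∇ f x - ∇ f y‖ ≤ L * ‖x - y‖)
    (u : EuclideanSpace ℝ (Fin n))
    (g : EuclideanSpace ℝ (Fin n)) (hg : g = ∇ f u) (hg0 : g ≠ 0)
    (H : Matrix (Fin n) (Fin n) ℝ) (hH : H.PosSemidef)
    (M_H : ℝ) (hMH : 0 < M_H) (hHbd : ‖H‖ ≤ M_H)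
    (γ : ℝ) (hγ : 0 < γ)
    (η : ℝ) (hη : η ∈ Set.Ioo (0:ℝ) 1)
    (θ : ℝ) (hθ : θ ∈ Set.Ico (0:ℝ) 1)
    (mγ : EuclideanSpace ℝ (Fin n) → ℝ)
    (hmγ : ∀ v, mγ v = f u + ⟪g, v⟫ +
      (1/2) * ⟪v, Matrix.toEuclideanLin (H + γ • (1 : Matrix (Fin n) (Fin n) ℝ)) v⟫)
    (s t : EuclideanSpace ℝ (Fin n))
    (hstep : Matrix.toEuclideanLin (H + γ • (1 : Matrix (Fin n) (Fin n) ℝ)) s = -g + t)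
    (ht : ‖t‖ ≤ θ * Real.sqrt (γ / (‖H‖ + γ)) * ‖g‖)
    (hunsucc : f (u + s) - f u > η * (mγ s - mγ 0)) :
    (1 - η) * (1 - θ^2) * γ^2 < (1 + θ)^2 * (L - γ) * (M_H + γ) ∧ γ < L := by
  obtain ⟨hη0, hη1⟩ := hη
  obtain ⟨hθ0, hθ1⟩ := hθ
  have hHn : (0:ℝ) ≤ ‖H‖ := norm_nonneg _
  have hΛ : (0:ℝ) < ‖H‖ + γ := by positivity
  have hgn : (0:ℝ) < ‖g‖ := norm_pos_iff.mpr hg0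
  have hg2 : (0:ℝ) < ‖g‖ ^ 2 := by positivity
  obtain ⟨hsym, hcoer, hub, hsurj⟩ := matrix_facts H hH γ hγ
  set A := Matrix.toEuclideanLin (H + γ • (1 : Matrix (Fin n) (Fin n) ℝ)) with hA
  have hpos : ∀ x : EuclideanSpace ℝ (Fin n), 0 ≤ ⟪x, A x⟫ := fun x =>
    le_trans (mul_nonneg hγ.le (sq_nonneg _)) (hcoer x)
  have hinj : Function.Injective A := by
    intro x y hxy
    have h0 : A (x - y) = 0 := by rw [map_sub, hxy, sub_self]
    have h1 := hcoer (x - y)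
    rw [h0, inner_zero_right] at h1
    have h2 : ‖x - y‖ ^ 2 ≤ 0 := by nlinarith [h1]
    have h3 : ‖x - y‖ = 0 :=
      le_antisymm (by nlinarith [h2, norm_nonneg (x - y)]) (norm_nonneg _)
    rw [← sub_eq_zero]
    exact norm_eq_zero.mp h3
  obtain ⟨p, hp⟩ := hsurj g
  obtain ⟨q, hq⟩ := hsurj t
  have hs_eq : s = q - p := by
    apply hinj
    rw [hstep, map_sub, hp, hq]
    abel
  have hcross : ⟪q, g⟫ = ⟪p, t⟫ := by
    rw [← hp, ← hq, ← hsym q p, real_inner_comm]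
  have hqt_nonneg : (0:ℝ) ≤ ⟪q, t⟫ := by rw [← hq]; exact hpos q
  have hpg_nonneg : (0:ℝ) ≤ ⟪p, g⟫ := by rw [← hp]; exact hpos p
  -- e1 : γ * ⟪q, t⟫ ≤ ‖t‖ ^ 2
  have e1 : γ * ⟪q, t⟫ ≤ ‖t‖ ^ 2 := by
    have h1 : γ * ‖q‖ ^ 2 ≤ ⟪q, t⟫ := by rw [← hq]; exact hcoer q
    have h2 : ⟪q, t⟫ ≤ ‖q‖ * ‖t‖ := real_inner_le_norm q t
    have h3 := mul_le_mul_of_nonneg_left h1 hγ.le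
    have h4 := mul_le_mul_of_nonneg_left h2 hγ.le
    nlinarith [sq_nonneg (γ * ‖q‖ - ‖t‖)]
  -- e2 : ‖g‖ ^ 2 ≤ (‖H‖ + γ) * ⟪p, g⟫
  have e2 : ‖g‖ ^ 2 ≤ (‖H‖ + γ) * ⟪p, g⟫ := by
    have hcs := cs_psd_form A hsym hpos p (A p)
    have h5 : ⟪p, A (A p)⟫ = ‖g‖ ^ 2 := by
      rw [← hsym p (A p), hp, real_inner_self_eq_norm_sq]
    have h6 := hub (A p)
    rw [hp] at hcs h5 h6
    nlinarith [hcs, h5, h6, mul_le_mul_of_nonneg_left h6 hpg_nonneg, hg2]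
  -- e3 : (‖H‖ + γ) * ‖t‖ ^ 2 ≤ θ ^ 2 * γ * ‖g‖ ^ 2
  have e3 : (‖H‖ + γ) * ‖t‖ ^ 2 ≤ θ ^ 2 * γ * ‖g‖ ^ 2 := by
    have h8 : ‖t‖ ^ 2 ≤ (θ * Real.sqrt (γ / (‖H‖ + γ)) * ‖g‖) ^ 2 := by
      have h := mul_self_le_mul_self (norm_nonneg t) ht
      nlinarith [h]
    have h9 : (θ * Real.sqrt (γ / (‖H‖ + γ)) * ‖g‖) ^ 2 =
        θ ^ 2 * (γ / (‖H‖ + γ)) * ‖g‖ ^ 2 := by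
      rw [mul_pow, mul_pow, Real.sq_sqrt (by positivity)]
    rw [h9] at h8
    have h10 : (‖H‖ + γ) * (θ ^ 2 * (γ / (‖H‖ + γ)) * ‖g‖ ^ 2) = θ ^ 2 * γ * ‖g‖ ^ 2 := by
      field_simp
    calc (‖H‖ + γ) * ‖t‖ ^ 2 ≤ (‖H‖ + γ) * (θ ^ 2 * (γ / (‖H‖ + γ)) * ‖g‖ ^ 2) :=
          mul_le_mul_of_nonneg_left h8 hΛ.le
      _ = θ ^ 2 * γ * ‖g‖ ^ 2 := h10
  -- e1' : (‖H‖ + γ) * ⟪q, t⟫ ≤ θ ^ 2 * ‖g‖ ^ 2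
  have e1' : (‖H‖ + γ) * ⟪q, t⟫ ≤ θ ^ 2 * ‖g‖ ^ 2 := by
    have h12 : γ * ((‖H‖ + γ) * ⟪q, t⟫) ≤ γ * (θ ^ 2 * ‖g‖ ^ 2) := by
      have h13 := mul_le_mul_of_nonneg_left e1 hΛ.le
      nlinarith [h13, e3]
    exact le_of_mul_le_mul_left h12 hγ
  -- bound on ‖s‖
  have hsqrt1 : Real.sqrt (γ / (‖H‖ + γ)) ≤ 1 :=
    Real.sqrt_le_one.mpr (by rw [div_le_one hΛ]; linarith)
  have hAs_bd : ‖A s‖ ≤ (1 + θ) * ‖g‖ := by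
    rw [hstep]
    calc ‖-g + t‖ ≤ ‖(-g : EuclideanSpace ℝ (Fin n))‖ + ‖t‖ := norm_add_le _ _
      _ = ‖g‖ + ‖t‖ := by rw [norm_neg]
      _ ≤ ‖g‖ + θ * Real.sqrt (γ / (‖H‖ + γ)) * ‖g‖ := by linarith [ht]
      _ ≤ (1 + θ) * ‖g‖ := by
          have h14 := mul_le_mul_of_nonneg_right
            (mul_le_mul_of_nonneg_left hsqrt1 hθ0) hgn.le
          nlinarith [h14]
  have i4 : γ ^ 2 * ‖s‖ ^ 2 ≤ (1 + θ) ^ 2 * ‖g‖ ^ 2 := by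
    have h11 : γ * ‖s‖ ^ 2 ≤ (1 + θ) * ‖g‖ * ‖s‖ := by
      calc γ * ‖s‖ ^ 2 ≤ ⟪s, A s⟫ := hcoer s
        _ ≤ ‖s‖ * ‖A s‖ := real_inner_le_norm _ _
        _ ≤ ‖s‖ * ((1 + θ) * ‖g‖) := mul_le_mul_of_nonneg_left hAs_bd (norm_nonneg s)
        _ = (1 + θ) * ‖g‖ * ‖s‖ := by ring
    nlinarith [sq_nonneg ((1 + θ) * ‖g‖ - γ * ‖s‖), mul_le_mul_of_nonneg_left h11 hγ.le]
  -- model values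
  have hgq : ⟪g, q⟫ = ⟪p, t⟫ := by rw [← hcross, real_inner_comm]
  have hgp : ⟪g, p⟫ = ⟪p, g⟫ := by rw [real_inner_comm]
  have exp1 : ⟪g, s⟫ = ⟪p, t⟫ - ⟪p, g⟫ := by
    rw [hs_eq, inner_sub_right, hgq, hgp]
  have exp2 : ⟪s, A s⟫ = ⟪p, g⟫ + ⟪q, t⟫ - 2 * ⟪p, t⟫ := by
    rw [hstep, hs_eq]
    simp only [inner_sub_left, inner_add_right, inner_neg_right]
    rw [hcross]
    ring
  have hm0 : mγ 0 = f u := by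
    rw [hmγ]
    simp
  have hms : mγ s = f u + (⟪p, t⟫ - ⟪p, g⟫) + (1/2) * (⟪p, g⟫ + ⟪q, t⟫ - 2 * ⟪p, t⟫) := by
    rw [hmγ, exp1, exp2]
  -- descent lemma
  have hdesc : f (u + s) ≤ f u + (⟪p, t⟫ - ⟪p, g⟫) + L / 2 * ‖s‖ ^ 2 := by
    have h := descent_lemma_aux f hf L hLip u s
    rw [← hg, exp1] at h
    exact h
  have i3 : γ * ‖s‖ ^ 2 ≤ ⟪p, g⟫ + ⟪q, t⟫ - 2 * ⟪p, t⟫ := by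
    rw [← exp2]; exact hcoer s
  have key1 : (1 - η) * (⟪p, g⟫ - ⟪q, t⟫) < (L - γ) * ‖s‖ ^ 2 := by
    rw [hms, hm0] at hunsucc
    linarith [hunsucc, hdesc, i3]
  have key2 : (1 - θ ^ 2) * ‖g‖ ^ 2 ≤ (‖H‖ + γ) * (⟪p, g⟫ - ⟪q, t⟫) := by
    linarith [e2, e1']
  have hθ2 : θ ^ 2 < 1 := by nlinarith
  have h13 : (0:ℝ) < (1 - θ ^ 2) * ‖g‖ ^ 2 := mul_pos (by linarith) hg2
  have hD_pos : (0:ℝ) < ⟪p, g⟫ - ⟪q, t⟫ := by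
    by_contra hc
    push_neg at hc
    have h15 : (‖H‖ + γ) * (⟪p, g⟫ - ⟪q, t⟫) ≤ 0 :=
      mul_nonpos_of_nonneg_of_nonpos hΛ.le hc
    linarith [key2, h13]
  have hγL : γ < L := by
    by_contra hc
    push_neg at hc
    have hrhs : (L - γ) * ‖s‖ ^ 2 ≤ 0 :=
      mul_nonpos_of_nonpos_of_nonneg (by linarith) (sq_nonneg _)
    linarith [key1, hrhs, mul_pos (by linarith : (0:ℝ) < 1 - η) hD_pos]
  refine ⟨?_, hγL⟩
  have hLγ : (0:ℝ) < L - γ := by linarith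
  have m1 : (1 - η) * γ ^ 2 * ((1 - θ ^ 2) * ‖g‖ ^ 2) ≤
      (1 - η) * γ ^ 2 * ((‖H‖ + γ) * (⟪p, g⟫ - ⟪q, t⟫)) := by
    apply mul_le_mul_of_nonneg_left key2
    have : (0:ℝ) < 1 - η := by linarith
    positivity
  have m2 : (‖H‖ + γ) * γ ^ 2 * ((1 - η) * (⟪p, g⟫ - ⟪q, t⟫)) <
      (‖H‖ + γ) * γ ^ 2 * ((L - γ) * ‖s‖ ^ 2) := by
    apply mul_lt_mul_of_pos_left key1
    positivity
  have m3 : (‖H‖ + γ) * ((L - γ) * (γ ^ 2 * ‖s‖ ^ 2)) ≤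
      (‖H‖ + γ) * ((L - γ) * ((1 + θ) ^ 2 * ‖g‖ ^ 2)) :=
    mul_le_mul_of_nonneg_left (mul_le_mul_of_nonneg_left i4 hLγ.le) hΛ.le
  have main : (1 - η) * (1 - θ ^ 2) * γ ^ 2 * ‖g‖ ^ 2 <
      (1 + θ) ^ 2 * (L - γ) * (‖H‖ + γ) * ‖g‖ ^ 2 := by linarith [m1, m2, m3]
  have step1 : (1 - η) * (1 - θ ^ 2) * γ ^ 2 < (1 + θ) ^ 2 * (L - γ) * (‖H‖ + γ) := by
    apply lt_of_mul_lt_mul_right _ hg2.le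
    linarith [main]
  calc (1 - η) * (1 - θ ^ 2) * γ ^ 2 < (1 + θ) ^ 2 * (L - γ) * (‖H‖ + γ) := step1
    _ ≤ (1 + θ) ^ 2 * (L - γ) * (M_H + γ) := by
        apply mul_le_mul_of_nonneg_left (by linarith)
        exact mul_nonneg (by positivity) hLγ.le
end

section
/- Consider the inexact regularization algorithm for least squares: f(u) = (1/2)‖R̂(u)‖² where R̂ : ℝⁿ → ℝ^m is continuously differentiable with Jacobian Ĝ, and ∇f is L-Lipschitz continuous. Let η ∈ (0,1), θ ∈ [0,1), 0 < γ_min ≤ γ_0, and generate sequences (u_k), (γ_k) as follows: at iteration k set g_k = Ĝ(u_k)ᵀR̂(u_k), pick a symmetric positive semidefinite H_k with ‖H_k‖ ≤ M_H, choose s_k with (H_k + γ_k I)s_k = −g_k + t_k and ‖t_k‖ ≤ θ√(γ_k/(‖H_k‖+γ_k))‖g_k‖, and set m_k(s) = f(u_k) + g_kᵀs + (1/2)sᵀ(H_k + γ_k I)s; if f(u_k) − f(u_k + s_k) ≥ η(m_k(0) − m_k(s_k)) then u_{k+1} = u_k + s_k and γ_{k+1} = max{γ_k/2, γ_min} (successful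 iteration), otherwise u_{k+1} = u_k and γ_{k+1} = 2γ_k. Suppose γ_k ≤ Γ for all k, for some Γ ≥ 1. Fix ε_R > 0 with ε_R² ≤ 2f(u_0) and ε_g ∈ (0,1), and let N be such that for every k ≤ N one has ‖R̂(u_k)‖ > ε_R and ‖g_k‖ > ε_g‖R̂(u_k)‖ (and g_k ≠ 0). Then the number of successful iterations among 0,…,N−1 is at most 1 + ((M_H + Γ)/(η(1 − θ²) ε_g²))·ln(2 f(u_0)/ε_R²), and the number of unsuccessful iterations among 0,…,N−1 is at most ⌈1 + log₂(Γ/γ_min)⌉ times one plus the number of successful iterations among 0,…,N−1. -/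
open Matrix
open scoped Matrix.Norms.L2Operator RealInnerProductSpace Gradient


private lemma inner_tEL (n : ℕ) (M : Matrix (Fin n) (Fin n) ℝ) (x y : EuclideanSpace ℝ (Fin n)) :
    ⟪x, Matrix.toEuclideanLin M y⟫ = (WithLp.equiv 2 _ x) ⬝ᵥ (M *ᵥ (WithLp.equiv 2 _ y)) := by
  simp only [PiLp.inner_apply, dotProduct, toEuclideanLin_apply, mulVec, RCLike.inner_apply,
    starRingEnd_apply, star_trivial]
  exact Finset.sum_congr rfl fun i _ => mul_comm _ _

private lemma psd_inner (n : ℕ) (M : Matrix (Fin n) (Fin n) ℝ) (hM : M.PosSemidef)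
    (x : EuclideanSpace ℝ (Fin n)) : 0 ≤ ⟪x, Matrix.toEuclideanLin M x⟫ := by
  have := hM.re_dotProduct_nonneg (WithLp.equiv 2 _ x)
  rw [inner_tEL]; simpa using this

private lemma tEL_mul (n : ℕ) (A B : Matrix (Fin n) (Fin n) ℝ) (x : EuclideanSpace ℝ (Fin n)) :
    Matrix.toEuclideanLin (A * B) x = Matrix.toEuclideanLin A (Matrix.toEuclideanLin B x) := by
  simp [toEuclideanLin_apply, mulVec_mulVec]

private lemma tEL_one (n : ℕ) (x : EuclideanSpace ℝ (Fin n)) :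
    Matrix.toEuclideanLin (1 : Matrix (Fin n) (Fin n) ℝ) x = x := by
  simp [toEuclideanLin_apply]

private lemma tEL_norm (n : ℕ) (M : Matrix (Fin n) (Fin n) ℝ) (x : EuclideanSpace ℝ (Fin n)) :
    ‖Matrix.toEuclideanLin M x‖ ≤ ‖M‖ * ‖x‖ :=
  Matrix.l2_opNorm_mulVec M x

private lemma matnorm_one_le (n : ℕ) : ‖(1 : Matrix (Fin n) (Fin n) ℝ)‖ ≤ 1 := by
  rw [Matrix.cstar_norm_def, _root_.map_one]
  exact ContinuousLinearMap.norm_id_le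

private lemma symm_tEL (n : ℕ) (M : Matrix (Fin n) (Fin n) ℝ) (hM : M.IsHermitian)
    (x y : EuclideanSpace ℝ (Fin n)) :
    ⟪Matrix.toEuclideanLin M x, y⟫ = ⟪x, Matrix.toEuclideanLin M y⟫ :=
  (Matrix.isHermitian_iff_isSymmetric.mp hM) x y

private lemma shifted_posdef (n : ℕ) (A : Matrix (Fin n) (Fin n) ℝ) (hA : A.PosSemidef)
    (c : ℝ) (hc : 0 < c) : (A + c • (1 : Matrix (Fin n) (Fin n) ℝ)).PosDef := by
  exact Matrix.PosDef.posSemidef_add hA (Matrix.PosDef.one.smul hc)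

open scoped MatrixOrder in
private lemma quad_lower (n : ℕ) (M : Matrix (Fin n) (Fin n) ℝ) (hM : M.PosSemidef)
    (x : EuclideanSpace ℝ (Fin n)) :
    ‖Matrix.toEuclideanLin M x‖ ^ 2 ≤ ‖M‖ * ⟪x, Matrix.toEuclideanLin M x⟫ := by
  set S := CFC.sqrt M with hS
  have hSS : S * S = M := CFC.sqrt_mul_sqrt_self M hM.nonneg
  have hMx : Matrix.toEuclideanLin M x
      = Matrix.toEuclideanLin S (Matrix.toEuclideanLin S x) := by
    rw [← hSS, tEL_mul]
  have hinner : ⟪x, Matrix.toEuclideanLin M x⟫ = ‖Matrix.toEuclideanLin S x‖ ^ 2 := by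
    rw [hMx, ← symm_tEL n S (CFC.sqrt_nonneg M).posSemidef.1, real_inner_self_eq_norm_sq]
  have hnS : ‖S‖ * ‖S‖ = ‖M‖ := by
    have h1 : (S)ᴴ * S = M := by rw [(CFC.sqrt_nonneg M).posSemidef.1.eq, hSS]
    calc ‖S‖ * ‖S‖ = ‖(S)ᴴ * S‖ := (Matrix.l2_opNorm_conjTranspose_mul_self _).symm
      _ = ‖M‖ := by rw [h1]
  have hb := tEL_norm n S (Matrix.toEuclideanLin S x)
  rw [hinner, hMx]
  have h0 : (0:ℝ) ≤ ‖Matrix.toEuclideanLin S (Matrix.toEuclideanLin S x)‖ := norm_nonneg _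
  nlinarith [norm_nonneg (Matrix.toEuclideanLin S x), norm_nonneg S]

set_option maxHeartbeats 1000000 in
private lemma model_decrease (n : ℕ) (A : Matrix (Fin n) (Fin n) ℝ) (hA : A.PosSemidef)
    (γk θ : ℝ) (hγk : 0 < γk) (hθ0 : 0 ≤ θ)
    (g s t : EuclideanSpace ℝ (Fin n))
    (hstep : Matrix.toEuclideanLin (A + γk • 1) s = -g + t)
    (ht : ‖t‖ ≤ θ * Real.sqrt (γk / (‖A‖ + γk)) * ‖g‖) :
    (1 - θ^2) * ‖g‖^2 / (2 * (‖A‖ + γk)) ≤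
      - ⟪g, s⟫ - (1/2) * ⟪s, Matrix.toEuclideanLin (A + γk • 1) s⟫ := by
  have hB : (A + γk • (1 : Matrix (Fin n) (Fin n) ℝ)).PosDef := shifted_posdef n A hA γk hγk
  set B := A + γk • (1 : Matrix (Fin n) (Fin n) ℝ) with hBdef
  have hΛpos : 0 < ‖A‖ + γk := by
    have := norm_nonneg A; linarith
  have hBn : ‖B‖ ≤ ‖A‖ + γk := by
    calc ‖B‖ ≤ ‖A‖ + ‖γk • (1 : Matrix (Fin n) (Fin n) ℝ)‖ := norm_add_le _ _
      _ ≤ ‖A‖ + γk := by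
          rw [norm_smul, Real.norm_eq_abs, abs_of_pos hγk]
          have := matnorm_one_le n
          nlinarith
  have hpsd : ∀ w : EuclideanSpace ℝ (Fin n), 0 ≤ ⟪w, Matrix.toEuclideanLin B w⟫ :=
    fun w => psd_inner n B hB.posSemidef w
  have hquad : ∀ w : EuclideanSpace ℝ (Fin n),
      ‖Matrix.toEuclideanLin B w‖^2 ≤ (‖A‖ + γk) * ⟪w, Matrix.toEuclideanLin B w⟫ := by
    intro w
    have h1 := quad_lower n B hB.posSemidef w
    nlinarith [hpsd w]
  have hlow : ∀ w : EuclideanSpace ℝ (Fin n),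
      γk * ‖w‖^2 ≤ ⟪w, Matrix.toEuclideanLin B w⟫ := by
    intro w
    have h1 : Matrix.toEuclideanLin B w
        = Matrix.toEuclideanLin A w + γk • w := by
      rw [hBdef, map_add, _root_.map_smul]
      simp [tEL_one, LinearMap.add_apply, LinearMap.smul_apply]
    rw [h1, inner_add_right, real_inner_smul_right, real_inner_self_eq_norm_sq]
    have := psd_inner n A hA w
    nlinarith
  -- inverse
  have hdet : IsUnit B.det := isUnit_iff_ne_zero.mpr hB.det_pos.ne'
  have hinv1 : ∀ w : EuclideanSpace ℝ (Fin n),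
      Matrix.toEuclideanLin B⁻¹ (Matrix.toEuclideanLin B w) = w := by
    intro w
    rw [← tEL_mul, Matrix.nonsing_inv_mul B hdet, tEL_one]
  have hinv2 : ∀ w : EuclideanSpace ℝ (Fin n),
      Matrix.toEuclideanLin B (Matrix.toEuclideanLin B⁻¹ w) = w := by
    intro w
    rw [← tEL_mul, Matrix.mul_nonsing_inv B hdet, tEL_one]
  have hs : s = Matrix.toEuclideanLin B⁻¹ (t - g) := by
    have h2 := congrArg (Matrix.toEuclideanLin B⁻¹) hstep
    rw [hinv1] at h2
    rw [h2, neg_add_eq_sub]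
  have hBiH : (B⁻¹).IsHermitian := hB.inv.1
  have hcross : ⟪g, Matrix.toEuclideanLin B⁻¹ t⟫ = ⟪Matrix.toEuclideanLin B⁻¹ g, t⟫ :=
    (symm_tEL n B⁻¹ hBiH g t).symm
  have hid : - ⟪g, s⟫ - (1/2) * ⟪s, Matrix.toEuclideanLin B s⟫
      = (1/2) * (⟪g, Matrix.toEuclideanLin B⁻¹ g⟫ - ⟪t, Matrix.toEuclideanLin B⁻¹ t⟫) := by
    have e1 : ⟪s, Matrix.toEuclideanLin B s⟫ = ⟪s, t⟫ - ⟪s, g⟫ := by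
      rw [hstep, inner_add_right, inner_neg_right]; ring
    have e2 : ⟪g, s⟫ = ⟪g, Matrix.toEuclideanLin B⁻¹ t⟫ - ⟪g, Matrix.toEuclideanLin B⁻¹ g⟫ := by
      rw [hs, map_sub, inner_sub_right]
    have e3 : ⟪s, t⟫ = ⟪t, Matrix.toEuclideanLin B⁻¹ t⟫ - ⟪g, Matrix.toEuclideanLin B⁻¹ t⟫ := by
      rw [hs, map_sub, inner_sub_left, real_inner_comm (Matrix.toEuclideanLin B⁻¹ t) t, hcross]
    have e4 : ⟪s, g⟫ = ⟪g, s⟫ := real_inner_comm g s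
    rw [e1, e2, e3, e4, e2]
    ring
  -- lower bound on ⟪g, Bi g⟫
  have lowg : ‖g‖^2 / (‖A‖ + γk) ≤ ⟪g, Matrix.toEuclideanLin B⁻¹ g⟫ := by
    have hgw : Matrix.toEuclideanLin B (Matrix.toEuclideanLin B⁻¹ g) = g := hinv2 g
    have h := hquad (Matrix.toEuclideanLin B⁻¹ g)
    rw [hgw] at h
    have e : ⟪Matrix.toEuclideanLin B⁻¹ g, g⟫ = ⟪g, Matrix.toEuclideanLin B⁻¹ g⟫ :=
      real_inner_comm _ _
    rw [e] at h
    rw [div_le_iff₀ hΛpos]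
    linarith
  -- upper bound on ⟪t, Bi t⟫
  have upt : ⟪t, Matrix.toEuclideanLin B⁻¹ t⟫ ≤ ‖t‖^2 / γk := by
    have htw : Matrix.toEuclideanLin B (Matrix.toEuclideanLin B⁻¹ t) = t := hinv2 t
    have e : ⟪t, Matrix.toEuclideanLin B⁻¹ t⟫
        = ⟪Matrix.toEuclideanLin B⁻¹ t, Matrix.toEuclideanLin B (Matrix.toEuclideanLin B⁻¹ t)⟫ := by
      rw [htw]; exact (real_inner_comm _ _).symm
    rw [e]
    rcases eq_or_ne (Matrix.toEuclideanLin B⁻¹ t) 0 with h0 | h0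
    · rw [h0]
      have ht0 : (0:ℝ) ≤ ‖t‖^2 / γk := by positivity
      simpa using ht0
    · have hwpos : 0 < ‖Matrix.toEuclideanLin B⁻¹ t‖ := norm_pos_iff.mpr h0
      have c1 := hlow (Matrix.toEuclideanLin B⁻¹ t)
      have c2 : ⟪Matrix.toEuclideanLin B⁻¹ t, Matrix.toEuclideanLin B (Matrix.toEuclideanLin B⁻¹ t)⟫
          ≤ ‖Matrix.toEuclideanLin B⁻¹ t‖ * ‖t‖ := by
        have h3 := real_inner_le_norm (Matrix.toEuclideanLin B⁻¹ t)
          (Matrix.toEuclideanLin B (Matrix.toEuclideanLin B⁻¹ t))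
        rw [htw] at h3
        rw [htw]
        exact h3
      have d1 : γk * ‖Matrix.toEuclideanLin B⁻¹ t‖ ≤ ‖t‖ := by
        have h4 := c1.trans c2
        nlinarith
      rw [le_div_iff₀ hγk]
      nlinarith [norm_nonneg t]
  -- squared inexactness bound
  have htsq : ‖t‖^2 ≤ θ^2 * (γk / (‖A‖ + γk)) * ‖g‖^2 := by
    have hx : (0:ℝ) ≤ γk / (‖A‖ + γk) := by positivity
    have h2 := mul_self_le_mul_self (norm_nonneg t) ht
    calc ‖t‖^2 = ‖t‖ * ‖t‖ := by ring
      _ ≤ (θ * Real.sqrt (γk / (‖A‖ + γk)) * ‖g‖) * (θ * Real.sqrt (γk / (‖A‖ + γk)) * ‖g‖) := h2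
      _ = θ^2 * (Real.sqrt (γk / (‖A‖ + γk)))^2 * ‖g‖^2 := by ring
      _ = θ^2 * (γk / (‖A‖ + γk)) * ‖g‖^2 := by rw [Real.sq_sqrt hx]
  have upt2 : ⟪t, Matrix.toEuclideanLin B⁻¹ t⟫ ≤ θ^2 * ‖g‖^2 / (‖A‖ + γk) := by
    have e : θ^2 * (γk / (‖A‖ + γk)) * ‖g‖^2 / γk = θ^2 * ‖g‖^2 / (‖A‖ + γk) := by
      field_simp [hγk.ne', hΛpos.ne']
    calc ⟪t, Matrix.toEuclideanLin B⁻¹ t⟫ ≤ ‖t‖^2 / γk := upt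
      _ ≤ θ^2 * (γk / (‖A‖ + γk)) * ‖g‖^2 / γk := by gcongr
      _ = θ^2 * ‖g‖^2 / (‖A‖ + γk) := e
  rw [hid]
  have efin : (1 - θ^2) * ‖g‖^2 / (2 * (‖A‖ + γk))
      = (1/2) * (‖g‖^2 / (‖A‖ + γk) - θ^2 * ‖g‖^2 / (‖A‖ + γk)) := by
    field_simp [hΛpos.ne']
  rw [efin]
  linarith [lowg, upt2]

set_option maxHeartbeats 2000000 in
/-- Iteration complexity of the inexact regularization method for
least squares: with `γ_k ≤ Γ` for all `k`, the number of successful iterations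
among `0,…,N-1` before reaching an `(ε_R, ε_g)`-stationary point is at most
`1 + ((M_H+Γ)/(η(1-θ²)ε_g²))·ln(2 f(u_0)/ε_R²)`, and the number of unsuccessful
iterations among `0,…,N-1` is at most `⌈1 + log₂(Γ/γ_min)⌉` times one plus the
number of successful iterations among `0,…,N-1`. -/
theorem inexact_regularization_complexity
    (n m : ℕ)
    (Rh : EuclideanSpace ℝ (Fin n) → EuclideanSpace ℝ (Fin m))
    (hRh : ContDiff ℝ 1 Rh)
    (Gh : EuclideanSpace ℝ (Fin n) → Matrix (Fin m) (Fin n) ℝ)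
    (hJac : ∀ x, fderiv ℝ Rh x = (Matrix.toEuclideanLin (Gh x)).toContinuousLinearMap)
    (f : EuclideanSpace ℝ (Fin n) → ℝ) (hf : ∀ x, f x = (1/2) * ‖Rh x‖^2)
    (L : ℝ) (hL : 0 < L)
    (hLip : ∀ x y : EuclideanSpace ℝ (Fin n), ‖∇ f x - ∇ f y‖ ≤ L * ‖x - y‖)
    (η : ℝ) (hη : η ∈ Set.Ioo (0:ℝ) 1)
    (θ : ℝ) (hθ : θ ∈ Set.Ico (0:ℝ) 1)
    (γmin : ℝ) (hγmin : 0 < γmin)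
    (M_H : ℝ) (hMH : 0 < M_H)
    -- the sequences generated by the algorithm
    (u : ℕ → EuclideanSpace ℝ (Fin n)) (γ : ℕ → ℝ) (hγ0 : γmin ≤ γ 0)
    (Hm : ℕ → Matrix (Fin n) (Fin n) ℝ)
    (hHpsd : ∀ k, (Hm k).PosSemidef) (hHbd : ∀ k, ‖Hm k‖ ≤ M_H)
    (g s t : ℕ → EuclideanSpace ℝ (Fin n))
    (hg : ∀ k, g k = Matrix.toEuclideanLin (Gh (u k))ᵀ (Rh (u k)))
    (hstep : ∀ k, Matrix.toEuclideanLin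
      (Hm k + γ k • (1 : Matrix (Fin n) (Fin n) ℝ)) (s k) = -(g k) + t k)
    (ht : ∀ k, ‖t k‖ ≤ θ * Real.sqrt (γ k / (‖Hm k‖ + γ k)) * ‖g k‖)
    (mdl : ℕ → EuclideanSpace ℝ (Fin n) → ℝ)
    (hmdl : ∀ k v, mdl k v = f (u k) + ⟪g k, v⟫ +
      (1/2) * ⟪v, Matrix.toEuclideanLin (Hm k + γ k • (1 : Matrix (Fin n) (Fin n) ℝ)) v⟫)
    (Succ : ℕ → Prop)
    (hSucc : ∀ k, Succ k ↔ f (u k) - f (u k + s k) ≥ η * (mdl k 0 - mdl k (s k)))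
    (hupS : ∀ k, Succ k → u (k + 1) = u k + s k ∧ γ (k + 1) = max (γ k / 2) γmin)
    (hupU : ∀ k, ¬Succ k → u (k + 1) = u k ∧ γ (k + 1) = 2 * γ k)
    -- uniform bound on the regularization parameter
    (Γ : ℝ) (hΓ : 1 ≤ Γ) (hγbd : ∀ k, γ k ≤ Γ)
    -- tolerances, and non-stationarity up to iteration N
    (ε_R : ℝ) (hεR : 0 < ε_R) (hεRJ0 : ε_R^2 ≤ 2 * f (u 0))
    (ε_g : ℝ) (hεg : ε_g ∈ Set.Ioo (0:ℝ) 1)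
    (N : ℕ)
    (hstat : ∀ k ≤ N, ε_R < ‖Rh (u k)‖ ∧ ε_g * ‖Rh (u k)‖ < ‖g k‖ ∧ g k ≠ 0) :
    (Nat.card {k : ℕ | k < N ∧ Succ k} : ℝ) ≤
        1 + ((M_H + Γ) / (η * (1 - θ^2) * ε_g^2)) * Real.log (2 * f (u 0) / ε_R^2) ∧
      (Nat.card {k : ℕ | k < N ∧ ¬Succ k} : ℝ) ≤
        (⌈(1:ℝ) + Real.logb 2 (Γ / γmin)⌉ : ℝ) *
          (1 + (Nat.card {k : ℕ | k < N ∧ Succ k} : ℝ)) := by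
  
  classical
  obtain ⟨hη0, hη1⟩ := hη
  obtain ⟨hθ0, hθ1⟩ := hθ
  obtain ⟨hεg0, hεg1⟩ := hεg
  -- basic positivity facts
  have hγlow : ∀ k, γmin ≤ γ k := by
    intro k
    induction k with
    | zero => exact hγ0
    | succ k ih =>
      by_cases hk : Succ k
      · rw [(hupS k hk).2]; exact le_max_right _ _
      · rw [(hupU k hk).2]; linarith
  have hγpos : ∀ k, 0 < γ k := fun k => lt_of_lt_of_le hγmin (hγlow k)
  have fpos : ∀ k, k ≤ N → ε_R ^ 2 / 2 < f (u k) := by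
    intro k hk
    have h1 := (hstat k hk).1
    rw [hf]
    nlinarith [norm_nonneg (Rh (u k))]
  have f0pos : 0 < f (u 0) := by
    have := fpos 0 (Nat.zero_le N); nlinarith
  have hMΓ : 0 < M_H + Γ := by linarith
  set c : ℝ := η * (1 - θ ^ 2) * ε_g ^ 2 / (M_H + Γ) with hcdef
  have hθsq : 0 < 1 - θ ^ 2 := by nlinarith
  have hc0 : 0 < c := by
    rw [hcdef]; positivity
  have hc1 : c < 1 := by
    rw [hcdef, div_lt_one hMΓ]
    have e1 : 0 < η * (1 - θ ^ 2) := mul_pos hη0 hθsq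
    have e2 : η * (1 - θ ^ 2) ≤ 1 := by nlinarith
    have e3 : ε_g ^ 2 ≤ 1 := by nlinarith
    have e4 : η * (1 - θ ^ 2) * ε_g ^ 2 ≤ 1 := by nlinarith [sq_nonneg ε_g]
    linarith
  have h1c : 0 < 1 - c := by linarith
  -- the model decrease bound at every iteration
  have hDec : ∀ k, (1 - θ ^ 2) * ‖g k‖ ^ 2 / (2 * (M_H + Γ)) ≤ mdl k 0 - mdl k (s k) := by
    intro k
    have hD := model_decrease n (Hm k) (hHpsd k) (γ k) θ (hγpos k) hθ0
      (g k) (s k) (t k) (hstep k) (ht k)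
    have hm0 : mdl k 0 = f (u k) := by rw [hmdl]; simp
    have hdiff : mdl k 0 - mdl k (s k)
        = - ⟪g k, s k⟫ - (1/2) * ⟪s k,
            Matrix.toEuclideanLin (Hm k + γ k • (1 : Matrix (Fin n) (Fin n) ℝ)) (s k)⟫ := by
      rw [hm0, hmdl]; ring
    have hmono : (1 - θ ^ 2) * ‖g k‖ ^ 2 / (2 * (M_H + Γ))
        ≤ (1 - θ ^ 2) * ‖g k‖ ^ 2 / (2 * (‖Hm k‖ + γ k)) := by
      have hpos : 0 < ‖Hm k‖ + γ k := by
        have := norm_nonneg (Hm k); have := hγpos k; linarith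
      have hle : ‖Hm k‖ + γ k ≤ M_H + Γ := by
        have := hHbd k; have := hγbd k; linarith
      gcongr <;> first | exact mul_nonneg hθsq.le (sq_nonneg _) | exact hle
    rw [hdiff]
    exact hmono.trans hD
  have hDecNonneg : ∀ k, 0 ≤ mdl k 0 - mdl k (s k) := by
    intro k
    refine le_trans ?_ (hDec k)
    positivity
  have mono : ∀ k, f (u (k + 1)) ≤ f (u k) := by
    intro k
    by_cases hk : Succ k
    · have h1 := (hSucc k).mp hk
      rw [(hupS k hk).1]
      nlinarith [hDecNonneg k]
    · rw [(hupU k hk).1]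
  -- decrease on successful iterations
  have key1 : ∀ k, k < N → Succ k → f (u (k + 1)) ≤ (1 - c) * f (u k) := by
    intro k hk hSk
    have hge := (hSucc k).mp hSk
    have hup := (hupS k hSk).1
    have hRf : ‖Rh (u k)‖ ^ 2 = 2 * f (u k) := by rw [hf]; ring
    have hgbd : ε_g ^ 2 * (2 * f (u k)) ≤ ‖g k‖ ^ 2 := by
      have h2 := (hstat k hk.le).2.1
      have h3 : (ε_g * ‖Rh (u k)‖) ^ 2 ≤ ‖g k‖ ^ 2 := by
        apply pow_le_pow_left₀ (by positivity) h2.le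
      rw [← hRf]
      nlinarith
    have h4 : (1 - θ ^ 2) * (ε_g ^ 2 * (2 * f (u k))) / (2 * (M_H + Γ))
        ≤ (1 - θ ^ 2) * ‖g k‖ ^ 2 / (2 * (M_H + Γ)) := by
      gcongr <;> first | exact hθsq.le | exact hgbd
    have h5 := h4.trans (hDec k)
    have h6 : η * ((1 - θ ^ 2) * (ε_g ^ 2 * (2 * f (u k))) / (2 * (M_H + Γ)))
        ≤ η * (mdl k 0 - mdl k (s k)) := by
      apply mul_le_mul_of_nonneg_left h5 hη0.le
    have h7 : η * ((1 - θ ^ 2) * (ε_g ^ 2 * (2 * f (u k))) / (2 * (M_H + Γ)))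
        = c * f (u k) := by
      rw [hcdef]
      field_simp
    rw [hup]
    linarith
  -- counting successful iterations
  set Sc : ℕ → ℕ := fun j => ((Finset.range j).filter (fun k => Succ k)).card with hScdef
  set Uc : ℕ → ℕ := fun j => ((Finset.range j).filter (fun k => ¬ Succ k)).card with hUcdef
  have cardS : Nat.card {k : ℕ | k < N ∧ Succ k} = Sc N := by
    have e : {k : ℕ | k < N ∧ Succ k}
        = ↑((Finset.range N).filter (fun k => Succ k)) := by
      ext k; simp [Finset.mem_filter, Finset.mem_range]
    rw [e, Nat.card_coe_set_eq, Set.ncard_coe_finset]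
  have cardU : Nat.card {k : ℕ | k < N ∧ ¬ Succ k} = Uc N := by
    have e : {k : ℕ | k < N ∧ ¬ Succ k}
        = ↑((Finset.range N).filter (fun k => ¬ Succ k)) := by
      ext k; simp [Finset.mem_filter, Finset.mem_range]
    rw [e, Nat.card_coe_set_eq, Set.ncard_coe_finset]
  have hScS : ∀ j, Succ j → Sc (j + 1) = Sc j + 1 := by
    intro j hj
    simp only [hScdef, Finset.range_add_one, Finset.filter_insert, if_pos hj]
    rw [Finset.card_insert_of_notMem (by simp)]
  have hScU : ∀ j, ¬ Succ j → Sc (j + 1) = Sc j := by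
    intro j hj
    simp only [hScdef, Finset.range_add_one, Finset.filter_insert, if_neg hj]
  have hUcS : ∀ j, Succ j → Uc (j + 1) = Uc j := by
    intro j hj
    simp only [hUcdef, Finset.range_add_one, Finset.filter_insert]
    rw [if_neg (by simpa using hj)]
  have hUcU : ∀ j, ¬ Succ j → Uc (j + 1) = Uc j + 1 := by
    intro j hj
    simp only [hUcdef, Finset.range_add_one, Finset.filter_insert]
    rw [if_pos hj, Finset.card_insert_of_notMem (by simp)]
  -- geometric decrease of f
  have hiter : ∀ j, j ≤ N → f (u j) ≤ (1 - c) ^ (Sc j) * f (u 0) := by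
    intro j
    induction j with
    | zero =>
      intro _
      simp only [hScdef]
      rw [Finset.range_zero, Finset.filter_empty, Finset.card_empty, pow_zero, one_mul]
    | succ j ih =>
      intro hj
      have hjN : j < N := hj
      have ihj := ih hjN.le
      by_cases hSj : Succ j
      · rw [hScS j hSj]
        have h1 := key1 j hjN hSj
        calc f (u (j + 1)) ≤ (1 - c) * f (u j) := h1
          _ ≤ (1 - c) * ((1 - c) ^ (Sc j) * f (u 0)) := by
              apply mul_le_mul_of_nonneg_left ihj h1c.le
          _ = (1 - c) ^ (Sc j + 1) * f (u 0) := by rw [pow_succ]; ring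
      · rw [hScU j hSj, (hupU j hSj).1]
        exact ihj
  -- bound on the number of successes
  have hSbound : (Sc N : ℝ) ≤ 1 + ((M_H + Γ) / (η * (1 - θ ^ 2) * ε_g ^ 2))
      * Real.log (2 * f (u 0) / ε_R ^ 2) := by
    have hfN := fpos N le_rfl
    have h1 : ε_R ^ 2 / (2 * f (u 0)) ≤ (1 - c) ^ (Sc N) := by
      rw [div_le_iff₀ (by linarith)]
      have h2 := hiter N le_rfl
      nlinarith
    have hposl : 0 < ε_R ^ 2 / (2 * f (u 0)) := by positivity
    have h3 : Real.log (ε_R ^ 2 / (2 * f (u 0))) ≤ Real.log ((1 - c) ^ (Sc N)) :=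
      Real.log_le_log hposl h1
    rw [Real.log_pow] at h3
    have h4 : Real.log (ε_R ^ 2 / (2 * f (u 0))) = - Real.log (2 * f (u 0) / ε_R ^ 2) := by
      rw [← Real.log_inv, inv_div]
    rw [h4] at h3
    have hlc : Real.log (1 - c) ≤ - c := by
      have := Real.log_le_sub_one_of_pos h1c
      linarith
    have h5 : (Sc N : ℝ) * Real.log (1 - c) ≤ (Sc N : ℝ) * (-c) :=
      mul_le_mul_of_nonneg_left hlc (Nat.cast_nonneg _)
    have h6 : (Sc N : ℝ) * c ≤ Real.log (2 * f (u 0) / ε_R ^ 2) := by linarith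
    set K : ℝ := (M_H + Γ) / (η * (1 - θ ^ 2) * ε_g ^ 2) with hKdef
    have hK0 : 0 < K := by rw [hKdef]; positivity
    have hKc : c * K = 1 := by
      rw [hcdef, hKdef]
      field_simp
    have h7 : (Sc N : ℝ) * c * K ≤ Real.log (2 * f (u 0) / ε_R ^ 2) * K :=
      mul_le_mul_of_nonneg_right h6 hK0.le
    have h8 : (Sc N : ℝ) * c * K = (Sc N : ℝ) := by
      rw [mul_assoc, hKc, mul_one]
    rw [h8] at h7
    linarith
  -- the logb recursion for γ
  have hlogb : ∀ j, Real.logb 2 (γ 0) - (Sc j : ℝ) + (Uc j : ℝ) ≤ Real.logb 2 (γ j) := by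
    intro j
    induction j with
    | zero =>
      simp only [hScdef, hUcdef]
      rw [Finset.range_zero, Finset.filter_empty, Finset.filter_empty, Finset.card_empty]
      norm_num
    | succ j ih =>
      by_cases hSj : Succ j
      · have hup := (hupS j hSj).2
        have h1 : γ j / 2 ≤ γ (j + 1) := by rw [hup]; exact le_max_left _ _
        have h2 : Real.logb 2 (γ j / 2) ≤ Real.logb 2 (γ (j + 1)) :=
          Real.logb_le_logb_of_le one_lt_two (half_pos (hγpos j)) h1
        have h3 : Real.logb 2 (γ j / 2) = Real.logb 2 (γ j) - 1 := by
          rw [Real.logb_div (hγpos j).ne' two_ne_zero, Real.logb_self_eq_one (by norm_num)]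
        rw [hScS j hSj, hUcS j hSj]
        push_cast
        rw [h3] at h2
        linarith
      · have hup := (hupU j hSj).2
        have h2 : Real.logb 2 (γ (j + 1)) = 1 + Real.logb 2 (γ j) := by
          rw [hup, Real.logb_mul two_ne_zero (hγpos j).ne',
            Real.logb_self_eq_one (by norm_num)]
        rw [hScU j hSj, hUcU j hSj]
        push_cast
        linarith
  -- bound on the number of failures
  have hΓpos : 0 < Γ := by linarith
  have hγmle : γmin ≤ Γ := hγ0.trans (hγbd 0)
  have hUbound : (Uc N : ℝ) ≤ (Sc N : ℝ) + Real.logb 2 (Γ / γmin) := by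
    have h1 := hlogb N
    have h2 : Real.logb 2 (γ N) ≤ Real.logb 2 Γ :=
      Real.logb_le_logb_of_le one_lt_two (hγpos N) (hγbd N)
    have h3 : Real.logb 2 γmin ≤ Real.logb 2 (γ 0) :=
      Real.logb_le_logb_of_le one_lt_two hγmin hγ0
    have h4 : Real.logb 2 (Γ / γmin) = Real.logb 2 Γ - Real.logb 2 γmin :=
      Real.logb_div hΓpos.ne' hγmin.ne'
    rw [h4]
    linarith
  have ha : 0 ≤ Real.logb 2 (Γ / γmin) := by
    apply Real.logb_nonneg one_lt_two
    rw [le_div_iff₀ hγmin]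
    linarith
  constructor
  · rw [cardS]
    exact hSbound
  · rw [cardS, cardU]
    have hceil : (1 : ℝ) + Real.logb 2 (Γ / γmin)
        ≤ (⌈(1:ℝ) + Real.logb 2 (Γ / γmin)⌉ : ℝ) := Int.le_ceil _
    have hSnn : (0:ℝ) ≤ (Sc N : ℝ) := Nat.cast_nonneg _
    have h1 : ((1 : ℝ) + Real.logb 2 (Γ / γmin)) * (1 + (Sc N : ℝ))
        ≤ (⌈(1:ℝ) + Real.logb 2 (Γ / γmin)⌉ : ℝ) * (1 + (Sc N : ℝ)) := by
      apply mul_le_mul_of_nonneg_right hceil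
      linarith
    nlinarith
end
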